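/- arXiv:1706.07281 — 3 statements merged into one kernel-verified Lean document; each statement's English description precedes it below -/
import Mathlib

section
/- Let n ≥ 2 and let A be a nonempty open subset of ℝⁿ. If there exist finitely many points p₁, …, p_k in ℝⁿ such that A ∪ {p₁, …, p_k} is closed, then the closure of A is all of ℝⁿ. -/
theorem stmt_0 (n : ℕ) (hn : 2 ≤ n) (A : Set (EuclideanSpace ℝ (Fin n)))
    (hne : A.Nonempty) (hA : IsOpen A) (P : Finset (EuclideanSpace ℝ (Fin n)))
    (hclosed : IsClosed (A ∪ (P : Set (EuclideanSpace ℝ (Fin n))))) :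
    closure A = Set.univ := by
  haveI : Nonempty (Fin n) := ⟨⟨0, by omega⟩⟩
  haveI : Nontrivial (EuclideanSpace ℝ (Fin n)) := inferInstance
  have hrank : 1 < Module.rank ℝ (EuclideanSpace ℝ (Fin n)) := by
    rw [← Module.finrank_eq_rank, finrank_euclideanSpace_fin]
    exact_mod_cast (by omega : 1 < n)
  by_contra h
  have hV : ((closure A)ᶜ).Nonempty := by
    rw [Set.nonempty_compl]
    exact h
  have hsub : closure A ⊆ A ∪ ↑P := closure_minimal Set.subset_union_left hclosed
  have hcnt : (↑P : Set (EuclideanSpace ℝ (Fin n))).Countable := P.countable_toSet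
  have hdense : Dense ((↑P : Set (EuclideanSpace ℝ (Fin n)))ᶜ) := hcnt.dense_compl ℝ
  have hconn : IsPreconnected ((↑P : Set (EuclideanSpace ℝ (Fin n)))ᶜ) :=
    (hcnt.isConnected_compl_of_one_lt_rank hrank).isPreconnected
  have hcover : (↑P : Set (EuclideanSpace ℝ (Fin n)))ᶜ ⊆ A ∪ (closure A)ᶜ := by
    intro x hx
    by_cases hxc : x ∈ closure A
    · rcases hsub hxc with hxa | hxp
      · exact Or.inl hxa
      · exact absurd hxp hx
    · exact Or.inr hxc
  have h1 : ((↑P : Set (EuclideanSpace ℝ (Fin n)))ᶜ ∩ A).Nonempty := by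
    rw [Set.inter_comm]; exact hdense.inter_open_nonempty A hA hne
  have h2 : ((↑P : Set (EuclideanSpace ℝ (Fin n)))ᶜ ∩ (closure A)ᶜ).Nonempty := by
    rw [Set.inter_comm]
    exact hdense.inter_open_nonempty _ isClosed_closure.isOpen_compl hV
  obtain ⟨x, -, hxA, hxc⟩ := hconn A (closure A)ᶜ hA isClosed_closure.isOpen_compl hcover h1 h2
  exact hxc (subset_closure hxA)
end

section
/- Let n ≥ 2, let A ⊆ ℝⁿ be open, let b ∉ closure(A) and a ∈ A. Then for any k, one can find k+1 distinct points x₁, …, x_{k+1} in A such that the segments [b, xᵢ] pairwise intersect only at b, and each segment [b, xᵢ] contains a boundary point of A. Consequently, if A is nonempty and open and closure(A) ≠ ℝⁿ, then the boundary of A is infinite. -/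
open Set
open RealInnerProductSpace

lemma seg_hits_frontier {E : Type*} [TopologicalSpace E] {s A : Set E}
    (hs : IsPreconnected s) {p q : E} (hp : p ∈ s) (hpA : p ∈ A)
    (hq : q ∈ s) (hqA : q ∉ closure A) : ∃ y ∈ s, y ∈ frontier A := by
  by_contra h
  push_neg at h
  have hsub : s ⊆ interior A ∪ (closure A)ᶜ := by
    intro z hz
    rcases Classical.em (z ∈ closure A) with hzc | hzc
    · left
      rcases Classical.em (z ∈ interior A) with h1 | h1
      · exact h1
      · exact absurd ⟨hzc, h1⟩ (h z hz)
    · right; exact hzc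
  have := hs (interior A) (closure A)ᶜ isOpen_interior isClosed_closure.isOpen_compl hsub
    ⟨p, hp, by
      rcases Classical.em (p ∈ interior A) with h1 | h1
      · exact h1
      · exact absurd ⟨subset_closure hpA, h1⟩ (h p hp)⟩
    ⟨q, hq, hqA⟩
  obtain ⟨z, hz, hz1, hz2⟩ := this
  exact hz2 (subset_closure (interior_subset hz1))

lemma exists_unit_orth (n : ℕ) (hn : 2 ≤ n) (w : EuclideanSpace ℝ (Fin n)) (hw : w ≠ 0) :
    ∃ u : EuclideanSpace ℝ (Fin n), ‖u‖ = 1 ∧ ⟪u, w⟫ = 0 := by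
  set K : Submodule ℝ (EuclideanSpace ℝ (Fin n)) := ℝ ∙ w
  have h1 : Module.finrank ℝ K + Module.finrank ℝ Kᗮ = n := by
    rw [K.finrank_add_finrank_orthogonal]
    simp [finrank_euclideanSpace]
  have h2 : Module.finrank ℝ K = 1 := finrank_span_singleton hw
  have h3 : 0 < Module.finrank ℝ Kᗮ := by omega
  have hne : Kᗮ ≠ ⊥ := by
    intro hbot
    rw [hbot, finrank_bot] at h3
    exact lt_irrefl 0 h3
  obtain ⟨v, hv, hv0⟩ := Submodule.exists_mem_ne_zero_of_ne_bot hne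
  refine ⟨‖v‖⁻¹ • v, ?_, ?_⟩
  · simp [norm_smul, hv0]
  · have h0 : ⟪w, v⟫ = 0 := (Submodule.mem_orthogonal K v).mp hv w
      (Submodule.mem_span_singleton_self _)
    rw [real_inner_smul_left, real_inner_comm, h0, mul_zero]

theorem stmt_2 (n : ℕ) (hn : 2 ≤ n) (A : Set (EuclideanSpace ℝ (Fin n)))
    (hA : IsOpen A) (a b : EuclideanSpace ℝ (Fin n)) (ha : a ∈ A)
    (hb : b ∉ closure A) :
    (∀ k : ℕ, ∃ x : Fin (k + 1) → EuclideanSpace ℝ (Fin n),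
      Function.Injective x ∧ (∀ i, x i ∈ A) ∧
      (∀ i j, i ≠ j → segment ℝ b (x i) ∩ segment ℝ b (x j) = {b}) ∧
      (∀ i, ∃ y ∈ segment ℝ b (x i), y ∈ frontier A)) ∧
    (frontier A).Infinite := by
  have hab : a - b ≠ 0 := by
    intro h
    exact hb (sub_eq_zero.mp h ▸ subset_closure ha)
  obtain ⟨u, hu1, hu0⟩ := exists_unit_orth n hn (a - b) hab
  have hu0' : ⟪a - b, u⟫ = 0 := by rw [real_inner_comm]; exact hu0
  have huu : ⟪u, u⟫ = (1 : ℝ) := by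
    rw [real_inner_self_eq_norm_sq, hu1]; norm_num
  have hab2 : (0 : ℝ) < ⟪a - b, a - b⟫ := by
    have h := norm_pos_iff.mpr hab
    rw [real_inner_self_eq_norm_sq]
    positivity
  have main : ∀ k : ℕ, ∃ x : Fin (k + 1) → EuclideanSpace ℝ (Fin n),
      Function.Injective x ∧ (∀ i, x i ∈ A) ∧
      (∀ i j, i ≠ j → segment ℝ b (x i) ∩ segment ℝ b (x j) = {b}) ∧
      (∀ i, ∃ y ∈ segment ℝ b (x i), y ∈ frontier A) := by
    intro k
    obtain ⟨ε, hε, hball⟩ := Metric.isOpen_iff.mp hA a ha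
    set δ : Fin (k + 1) → ℝ := fun i => ε / 2 * (((i : ℕ) : ℝ) + 1) / (k + 1) with hδ
    have hδpos : ∀ i, 0 < δ i := by
      intro i
      apply div_pos (by positivity) (by positivity)
    have hδlt : ∀ i, δ i < ε := by
      intro i
      have hi' : (i : ℕ) + 1 ≤ k + 1 := i.is_lt
      have hi : (((i : ℕ) : ℝ) + 1) ≤ (k + 1 : ℝ) := by exact_mod_cast hi'
      calc δ i = ε / 2 * ((((i : ℕ) : ℝ) + 1) / (k + 1)) := by ring
        _ ≤ ε / 2 * 1 := by
            apply mul_le_mul_of_nonneg_left _ (by positivity)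
            rw [div_le_one (by positivity)]
            exact hi
        _ < ε := by linarith
    have hδmono : StrictMono δ := by
      intro i j hij
      have hij' : (((i : ℕ) : ℝ)) < ((j : ℕ) : ℝ) := by exact_mod_cast hij
      simp only [hδ]
      gcongr
    have hδinj : Function.Injective δ := hδmono.injective
    set x : Fin (k + 1) → EuclideanSpace ℝ (Fin n) := fun i => a + δ i • u with hx
    have hxA : ∀ i, x i ∈ A := by
      intro i
      apply hball
      rw [Metric.mem_ball, dist_eq_norm]
      have : x i - a = δ i • u := by simp [hx]
      rw [this, norm_smul, hu1, mul_one, Real.norm_eq_abs, abs_of_pos (hδpos i)]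
      exact hδlt i
    have hseg : ∀ (θ c : ℝ), (1 - θ) • b + θ • (a + c • u) - b
        = θ • (a - b) + (θ * c) • u := by
      intro θ c
      module
    have hinner1 : ∀ (θ c : ℝ), ⟪(1 - θ) • b + θ • (a + c • u) - b, a - b⟫
        = θ * ⟪a - b, a - b⟫ := by
      intro θ c
      rw [hseg, inner_add_left, real_inner_smul_left, real_inner_smul_left, hu0,
        mul_zero, add_zero]
    have hinner2 : ∀ (θ c : ℝ), ⟪(1 - θ) • b + θ • (a + c • u) - b, u⟫ = θ * c := by
      intro θ c
      rw [hseg, inner_add_left, real_inner_smul_left, real_inner_smul_left, hu0', huu,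
        mul_zero, zero_add, mul_one]
    refine ⟨x, ?_, hxA, ?_, ?_⟩
    · intro i j hij
      apply hδinj
      have : δ i • u = δ j • u := by
        have := hij
        simp only [hx] at this
        exact add_left_cancel this
      have h2 : ⟪δ i • u, u⟫ = ⟪δ j • u, u⟫ := by rw [this]
      rw [real_inner_smul_left, real_inner_smul_left, huu, mul_one, mul_one] at h2
      exact h2
    · intro i j hij
      apply Subset.antisymm
      · rintro z ⟨hzi, hzj⟩
        rw [segment_eq_image] at hzi hzj
        obtain ⟨θ, hθ, hzθ⟩ := hzi
        obtain ⟨φ, hφ, hzφ⟩ := hzj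
        simp only [hx] at hzθ hzφ
        have e1 : ⟪z - b, a - b⟫ = θ * ⟪a - b, a - b⟫ := by rw [← hzθ]; exact hinner1 _ _
        have e1' : ⟪z - b, a - b⟫ = φ * ⟪a - b, a - b⟫ := by rw [← hzφ]; exact hinner1 _ _
        have hθφ : θ = φ := by
          have := e1.symm.trans e1'
          exact mul_right_cancel₀ (ne_of_gt hab2) this
        have e2 : ⟪z - b, u⟫ = θ * δ i := by rw [← hzθ]; exact hinner2 _ _
        have e2' : ⟪z - b, u⟫ = φ * δ j := by rw [← hzφ]; exact hinner2 _ _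
        have hθ0 : θ = 0 := by
          by_contra hθ0
          apply hij
          apply hδinj
          have : θ * δ i = θ * δ j := by rw [← e2, hθφ, e2']
          exact mul_left_cancel₀ hθ0 this
        rw [mem_singleton_iff, ← hzθ, hθ0]
        simp
      · exact Set.singleton_subset_iff.mpr
          ⟨left_mem_segment ℝ b (x i), left_mem_segment ℝ b (x j)⟩
    · intro i
      exact seg_hits_frontier (convex_segment b (x i)).isPreconnected
        (right_mem_segment ℝ b (x i)) (hxA i) (left_mem_segment ℝ b (x i)) hb
  refine ⟨main, ?_⟩
  by_contra hinf
  rw [Set.not_infinite] at hinf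
  have hF := hinf
  obtain ⟨x, hinj, hxA, hsegs, hfr⟩ := main hF.toFinset.card
  choose y hyseg hyfr using hfr
  have hyinj : Function.Injective y := by
    intro i j hij
    by_contra hne
    have : y i ∈ segment ℝ b (x i) ∩ segment ℝ b (x j) := ⟨hyseg i, hij ▸ hyseg j⟩
    rw [hsegs i j hne, mem_singleton_iff] at this
    exact hb (this ▸ (frontier_subset_closure (hyfr i)))
  have hcard : (Finset.univ : Finset (Fin (hF.toFinset.card + 1))).card ≤ hF.toFinset.card :=
    Finset.card_le_card_of_injOn y (fun i _ => hF.mem_toFinset.mpr (hyfr i))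
      (hyinj.injOn)
  simp [Finset.card_univ] at hcard
end

section
/- Let f : ℝⁿ → ℝⁿ be a C¹ map with n ≥ 2 such that det Df(x) ≠ 0 for every x ∈ ℝⁿ, and such that |f(x)| → ∞ as |x| → ∞. Then f is surjective. -/
theorem stmt_4 (n : ℕ) (hn : 2 ≤ n)
    (f : EuclideanSpace ℝ (Fin n) → EuclideanSpace ℝ (Fin n))
    (hf : ContDiff ℝ 1 f)
    (hdet : ∀ x, (fderiv ℝ f x).det ≠ 0)
    (hcoercive : Filter.Tendsto (fun x => ‖f x‖) (Filter.cocompact _) Filter.atTop) :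
    Function.Surjective f := by
  have hcont : Continuous f := hf.continuous
  -- f is an open map via inverse function theorem
  have hopen : IsOpen (Set.range f) := by
    rw [isOpen_iff_mem_nhds]
    rintro y ⟨x, rfl⟩
    have hsd : HasStrictFDerivAt f
        ((fderiv ℝ f x).toContinuousLinearEquivOfDetNeZero (hdet x) :
          EuclideanSpace ℝ (Fin n) →L[ℝ] EuclideanSpace ℝ (Fin n)) x := by
      simpa using hf.contDiffAt.hasStrictFDerivAt one_ne_zero
    have := hsd.map_nhds_eq_of_equiv
    rw [← this]
    exact Filter.mem_map.mpr (Filter.univ_mem' fun a => Set.mem_range_self a)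
  -- f is proper, hence closed
  have hproper : IsProperMap f := by
    rw [isProperMap_iff_tendsto_cocompact]
    refine ⟨hcont, ?_⟩
    rw [← Metric.cobounded_eq_cocompact (α := EuclideanSpace ℝ (Fin n)),
      ← comap_norm_atTop (E := EuclideanSpace ℝ (Fin n)), Filter.tendsto_comap_iff]
    exact hcoercive.mono_left (le_of_eq (by rw [comap_norm_atTop, Metric.cobounded_eq_cocompact]))
  have hclosed : IsClosed (Set.range f) := by
    have := hproper.isClosedMap.isClosed_range
    exact this
  have : Set.range f = Set.univ :=
    (IsClopen.eq_univ ⟨hclosed, hopen⟩ (Set.range_nonempty f))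
  intro y
  have : y ∈ Set.range f := this ▸ Set.mem_univ y
  exact this
end
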